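/- Let v be a row k-vector, J an invertible k×k real matrix, and let B be the k×k matrix whose first row is v·J and whose remaining k-1 rows are the last k-1 rows of J. Writing v = (v₁, v') with v₁ ∈ ℝ and partitioning J into blocks J_{ψψ} (1×1), J_{ψλ}, J_{λψ}, J_{λλ} with J_{λλ} invertible and J symmetric, then det(B) = det(J_{λλ}) · v₁ · (J_{ψψ} - J_{ψλ} J_{λλ}⁻¹ J_{λψ}). -/

import Mathlib

open Matrix

/-- Let `J` be a symmetric invertible matrix partitioned with a `1×1` top-left block,
with `J_{λλ}` invertible, and let `v` be a row vector whose first component is `v₁` and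
whose remaining part is `-v₁ • J_{ψλ} J_{λλ}⁻¹`.  If `B` is the matrix whose first row
is `v * J` and whose remaining rows are the last rows of `J`, then
`det B = det J_{λλ} * v₁ * (J_{ψψ} - J_{ψλ} J_{λλ}⁻¹ J_{λψ})`. -/
theorem det_first_row_replaced
    (m : ℕ)
    (Jpp : Matrix (Fin 1) (Fin 1) ℝ) (Jpl : Matrix (Fin 1) (Fin m) ℝ)
    (Jlp : Matrix (Fin m) (Fin 1) ℝ) (Jll : Matrix (Fin m) (Fin m) ℝ)
    (J : Matrix (Fin 1 ⊕ Fin m) (Fin 1 ⊕ Fin m) ℝ)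
    (hJ : J = Matrix.fromBlocks Jpp Jpl Jlp Jll)
    (hsymm : J.IsSymm) (hJu : IsUnit J.det) (hll : IsUnit Jll.det)
    (v₁ : ℝ) (v : Matrix (Fin 1) (Fin 1 ⊕ Fin m) ℝ)
    (hv₁ : v.submatrix id Sum.inl = v₁ • (1 : Matrix (Fin 1) (Fin 1) ℝ))
    (hv' : v.submatrix id Sum.inr = -v₁ • (Jpl * Jll⁻¹))
    (B : Matrix (Fin 1 ⊕ Fin m) (Fin 1 ⊕ Fin m) ℝ)
    (hB : B = Matrix.fromBlocks ((v * J).submatrix id Sum.inl) ((v * J).submatrix id Sum.inr) Jlp Jll) :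
    B.det = Jll.det * v₁ * (Jpp 0 0 - (Jpl * Jll⁻¹ * Jlp) 0 0) := by
  have hv : v = fromCols (v.submatrix id Sum.inl) (v.submatrix id Sum.inr) := by
    ext i (j | j) <;> simp [fromCols]
  rw [hv₁, hv'] at hv
  have hvJ : v * J = fromCols
      (v₁ • (1 : Matrix (Fin 1) (Fin 1) ℝ) * Jpp + (-v₁ • (Jpl * Jll⁻¹)) * Jlp)
      (v₁ • (1 : Matrix (Fin 1) (Fin 1) ℝ) * Jpl + (-v₁ • (Jpl * Jll⁻¹)) * Jll) := by
    rw [hv, hJ, fromCols_mul_fromBlocks]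
  have hinv : Jll⁻¹ * Jll = 1 := nonsing_inv_mul Jll hll
  have h2 : (v * J).submatrix id Sum.inr = 0 := by
    rw [hvJ]
    ext i j
    simp [fromCols, Matrix.mul_assoc, hinv]
  have h1 : (v * J).submatrix id Sum.inl = v₁ • (Jpp - Jpl * Jll⁻¹ * Jlp) := by
    rw [hvJ]
    ext i j
    simp [fromCols, smul_sub, mul_comm]
    ring
  rw [hB, h1, h2, det_fromBlocks_zero₁₂]
  rw [show (v₁ • (Jpp - Jpl * Jll⁻¹ * Jlp)).det = v₁ * (Jpp 0 0 - (Jpl * Jll⁻¹ * Jlp) 0 0) by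
    rw [det_fin_one]; simp]
  ring
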